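/- Let n ≥ 2 be an integer, let ν be a Lévy measure on ℝ with ∫ |y|^n ν(dy) < ∞ off every neighbourhood of 0 and ∫ |y|^n ν(dy) defined (possibly after restriction, all weighted integrals below finite), and let Λ > 0, ε > 0 and ξ ∈ [0,1] satisfy ν({|y| > ε}) + ξ ν({|y| = ε}) = Λ. Define ν_ε(dy) = ν(dy) 1_{{|y| > ε}} + ξ ν(dy) 1_{{|y| = ε}}. Then ν_ε minimizes J(ν̂) := ∫ |y|^n |ν − ν̂|(dy) over all finite positive measures ν̂ with ν̂(ℝ) = Λ, and the minimal value equals J(ν_ε) = ∫_{{|y| < ε}} |y|^n ν(dy) + (1−ξ) ∫_{{|y| = ε}} |y|^n ν(dy). -/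

import Mathlib

open MeasureTheory Filter Set
open scoped ENNReal

/-- The total variation measure `|μ - ν| = (μ - μ⊓ν) + (ν - μ⊓ν)` of the difference of two
positive measures. -/
noncomputable def tvDist (μ ν : Measure ℝ) : Measure ℝ := (μ - μ ⊓ ν) + (ν - μ ⊓ ν)

/-- The functional `J(ν̂) = ∫ |y|^n |ν - ν̂|(dy)`. -/
noncomputable def Jfun (n : ℕ) (ν νb : Measure ℝ) : ℝ≥0∞ :=
  ∫⁻ y, ENNReal.ofReal (|y| ^ n) ∂(tvDist ν νb)

/-- The truncation `ν_ε(dy) = ν(dy) 1_{|y|>ε} + ξ ν(dy) 1_{|y|=ε}` minimizes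
`J(ν̂) = ∫ |y|^n |ν - ν̂|(dy)` over all finite positive measures `ν̂` of total mass `Λ`, and
the minimal value is `∫_{|y|<ε} |y|^n ν(dy) + (1-ξ) ∫_{|y|=ε} |y|^n ν(dy)`. -/
theorem stmt_7 (n : ℕ) (hn : 2 ≤ n) (ν : Measure ℝ)
    (hν0 : ν {0} = 0)
    (hν2 : (∫⁻ y, ENNReal.ofReal (min 1 (y ^ 2)) ∂ν) < ⊤)
    (hνn : (∫⁻ y, ENNReal.ofReal (|y| ^ n) ∂ν) < ⊤)
    (Λ ε ξ : ℝ) (hΛ : 0 < Λ) (hε : 0 < ε) (hξ0 : 0 ≤ ξ) (hξ1 : ξ ≤ 1)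
    (hmass : ν {y : ℝ | ε < |y|} + ENNReal.ofReal ξ * ν {y : ℝ | |y| = ε} = ENNReal.ofReal Λ) :
    (Jfun n ν (ν.restrict {y : ℝ | ε < |y|}
        + ENNReal.ofReal ξ • ν.restrict {y : ℝ | |y| = ε}) =
      (∫⁻ y in {y : ℝ | |y| < ε}, ENNReal.ofReal (|y| ^ n) ∂ν) +
        ENNReal.ofReal (1 - ξ) * ∫⁻ y in {y : ℝ | |y| = ε}, ENNReal.ofReal (|y| ^ n) ∂ν) ∧
    ∀ νhat : Measure ℝ, IsFiniteMeasure νhat → νhat Set.univ = ENNReal.ofReal Λ →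
      Jfun n ν (ν.restrict {y : ℝ | ε < |y|}
          + ENNReal.ofReal ξ • ν.restrict {y : ℝ | |y| = ε}) ≤ Jfun n ν νhat := by
  set w : ℝ → ℝ≥0∞ := fun y => ENNReal.ofReal (|y| ^ n) with hw
  set c : ℝ≥0∞ := ENNReal.ofReal (ε ^ n) with hc
  set L : ℝ≥0∞ := ENNReal.ofReal Λ with hL
  set A : Set ℝ := {y : ℝ | ε < |y|} with hAdef
  set B : Set ℝ := {y : ℝ | |y| = ε} with hBdef
  set C : Set ℝ := {y : ℝ | |y| < ε} with hCdef
  set νe : Measure ℝ := ν.restrict A + ENNReal.ofReal ξ • ν.restrict B with hνe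
  have hA : MeasurableSet A := measurableSet_lt measurable_const measurable_id.abs
  have hB : MeasurableSet B := measurable_id.abs (measurableSet_singleton ε)
  have hC : MeasurableSet C := measurableSet_lt measurable_id.abs measurable_const
  have hw_meas : Measurable w := (measurable_id.abs.pow_const n).ennreal_ofReal
  have hg_meas : Measurable (fun y => w y - c) := hw_meas.sub measurable_const
  have hAB : Disjoint A B := by
    rw [Set.disjoint_left]
    intro y hy1 hy2
    exact absurd hy1 (by simp only [hBdef, mem_setOf_eq] at hy2; simp [hAdef, hy2])
  have hCB : Disjoint C B := by
    rw [Set.disjoint_left]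
    intro y hy1 hy2
    simp only [hBdef, mem_setOf_eq] at hy2
    simp only [hCdef, mem_setOf_eq, hy2] at hy1
    exact lt_irrefl _ hy1
  have hCBA : Disjoint (C ∪ B) A := by
    rw [Set.disjoint_left]
    intro y hy1 hy2
    simp only [hAdef, mem_setOf_eq] at hy2
    rcases hy1 with h | h
    · exact absurd (h.trans hy2) (lt_irrefl _)
    · simp only [hBdef, mem_setOf_eq] at h
      exact absurd hy2 (by simp [h])
  -- ν_ε ≤ ν
  have hle : νe ≤ ν := by
    refine Measure.le_iff'.mpr fun s => ?_
    calc νe s = ν.restrict A s + ENNReal.ofReal ξ * ν.restrict B s := by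
          simp [hνe, Measure.add_apply, Measure.smul_apply, smul_eq_mul]
      _ ≤ ν.restrict A s + ν.restrict B s := by
          refine add_le_add_right ?_ _
          calc ENNReal.ofReal ξ * ν.restrict B s ≤ 1 * ν.restrict B s :=
                mul_le_mul_left (ENNReal.ofReal_le_one.mpr hξ1) _
            _ = ν.restrict B s := one_mul _
      _ = ν.restrict (A ∪ B) s := by rw [Measure.restrict_union hAB hB]; rfl
      _ ≤ ν s := Measure.le_iff'.mp Measure.restrict_le_self s
  have hνAL : ν A ≤ L := by rw [← hmass]; exact le_self_add
  have hνA_ne : ν A ≠ ⊤ := ne_top_of_le_ne_top ENNReal.ofReal_ne_top hνAL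
  have hνe_univ : νe univ = L := by
    simp only [hνe, Measure.add_apply, Measure.smul_apply, Measure.restrict_apply_univ,
      smul_eq_mul]
    exact hmass
  haveI : IsFiniteMeasure νe := ⟨by rw [hνe_univ]; exact ENNReal.ofReal_lt_top⟩
  -- value of ∫ w over B
  have hintB : ∫⁻ y in B, w y ∂ν = c * ν B := by
    have he : ∫⁻ y in B, w y ∂ν = ∫⁻ _ in B, c ∂ν :=
      setLIntegral_congr_fun hB ((fun y (hy : |y| = ε) => by
        simp only [hw, hy, hc]))
    rw [he, setLIntegral_const]
  -- splitting w = (w - c) + c on A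
  have hcw : ∀ y ∈ A, c ≤ w y := fun y hy =>
    ENNReal.ofReal_le_ofReal (pow_le_pow_left₀ hε.le (le_of_lt hy) n)
  have hAeq : ∀ μ : Measure ℝ, ∫⁻ y in A, w y ∂μ = (∫⁻ y in A, (w y - c) ∂μ) + c * μ A := by
    intro μ
    calc ∫⁻ y in A, w y ∂μ = ∫⁻ y in A, ((w y - c) + c) ∂μ :=
          setLIntegral_congr_fun hA (fun y hy =>
            (tsub_add_cancel_of_le (hcw y hy)).symm)
      _ = (∫⁻ y in A, (w y - c) ∂μ) + c * μ A := by
          rw [lintegral_add_right _ measurable_const, setLIntegral_const]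
  -- value of ∫ w dν_ε
  have hξB : ENNReal.ofReal ξ * ν B = L - ν A := by
    rw [← hmass, ENNReal.add_sub_cancel_left hνA_ne]
  have hintνe : ∫⁻ y, w y ∂νe = (∫⁻ y in A, (w y - c) ∂ν) + c * L := by
    calc ∫⁻ y, w y ∂νe
        = (∫⁻ y in A, w y ∂ν) + ENNReal.ofReal ξ * ∫⁻ y in B, w y ∂ν := by
          rw [hνe, lintegral_add_measure, lintegral_smul_measure, smul_eq_mul]
      _ = (∫⁻ y in A, (w y - c) ∂ν) + c * ν A + c * (L - ν A) := by
          rw [hAeq ν, hintB, ← hξB]; ring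
      _ = (∫⁻ y in A, (w y - c) ∂ν) + c * L := by
          rw [add_assoc, ← mul_add, add_tsub_cancel_of_le hνAL]
  -- key inequality: any μ ≤ ν with μ(univ) ≤ L has ∫ w dμ ≤ ∫ w dν_ε
  have hkey : ∀ μ : Measure ℝ, μ ≤ ν → μ univ ≤ L → ∫⁻ y, w y ∂μ ≤ ∫⁻ y, w y ∂νe := by
    intro μ hμν hμL
    rw [hintνe]
    calc ∫⁻ y, w y ∂μ = (∫⁻ y in A, w y ∂μ) + ∫⁻ y in Aᶜ, w y ∂μ :=
          (lintegral_add_compl _ hA).symm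
      _ ≤ ((∫⁻ y in A, (w y - c) ∂μ) + c * μ A) + c * μ Aᶜ := by
          rw [hAeq μ]
          refine add_le_add_right ?_ _
          calc ∫⁻ y in Aᶜ, w y ∂μ ≤ ∫⁻ _ in Aᶜ, c ∂μ :=
                setLIntegral_mono measurable_const fun y hy => by
                  exact ENNReal.ofReal_le_ofReal
                    (pow_le_pow_left₀ (abs_nonneg y) (not_lt.mp hy) n)
            _ = c * μ Aᶜ := setLIntegral_const _ _
      _ = (∫⁻ y in A, (w y - c) ∂μ) + c * μ univ := by
          rw [add_assoc, ← mul_add, measure_add_measure_compl hA]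
      _ ≤ (∫⁻ y in A, (w y - c) ∂ν) + c * L := by
          refine add_le_add ?_ (mul_le_mul_right hμL _)
          exact lintegral_mono' (Measure.restrict_mono subset_rfl hμν) le_rfl
  -- the tvDist of ν and ν_ε
  have hinf : ν ⊓ νe = νe := inf_eq_right.mpr hle
  have hdecomp : (ν.restrict C + ENNReal.ofReal (1 - ξ) • ν.restrict B) + νe = ν := by
    have hB' : ν.restrict B
        = ENNReal.ofReal (1 - ξ) • ν.restrict B + ENNReal.ofReal ξ • ν.restrict B := by
      rw [← add_smul, ← ENNReal.ofReal_add (by linarith) hξ0, sub_add_cancel,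
        ENNReal.ofReal_one, one_smul]
    have huniv : C ∪ B ∪ A = univ := by
      ext y
      simp only [hAdef, hBdef, hCdef, mem_union, mem_setOf_eq, mem_univ, iff_true]
      rcases lt_trichotomy (|y|) ε with h | h | h
      · exact Or.inl (Or.inl h)
      · exact Or.inl (Or.inr h)
      · exact Or.inr h
    calc (ν.restrict C + ENNReal.ofReal (1 - ξ) • ν.restrict B) + νe
        = ν.restrict C + (ENNReal.ofReal (1 - ξ) • ν.restrict B
            + ENNReal.ofReal ξ • ν.restrict B) + ν.restrict A := by
          rw [hνe]; abel
      _ = (ν.restrict C + ν.restrict B) + ν.restrict A := by rw [← hB']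
      _ = ν.restrict (C ∪ B ∪ A) := by
          rw [Measure.restrict_union hCBA hA, Measure.restrict_union hCB hB]
      _ = ν := by rw [huniv, Measure.restrict_univ]
  have hsub : ν - νe = ν.restrict C + ENNReal.ofReal (1 - ξ) • ν.restrict B := by
    conv_lhs => rw [← hdecomp]
    exact Measure.add_sub_cancel
  have hJνe : Jfun n ν νe = ∫⁻ y, w y ∂(ν - νe) := by
    rw [Jfun, tvDist, hinf, Measure.sub_eq_zero_of_le le_rfl, add_zero]
  constructor
  · -- value of the minimum
    rw [hJνe, hsub, lintegral_add_measure, lintegral_smul_measure, smul_eq_mul]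
  · -- minimality
    intro νhat _ hmassb
    set m : Measure ℝ := ν ⊓ νhat with hm
    have hm1 : m ≤ ν := inf_le_left
    have hm2 : m ≤ νhat := inf_le_right
    have hmL : m univ ≤ L := by
      rw [← hmassb]; exact Measure.le_iff'.mp hm2 univ
    haveI : IsFiniteMeasure m :=
      ⟨lt_of_le_of_lt hmL ENNReal.ofReal_lt_top⟩
    have hνe_fin : ∫⁻ y, w y ∂νe ≠ ⊤ :=
      ne_top_of_le_ne_top hνn.ne (lintegral_mono' hle le_rfl)
    have h1 : Jfun n ν νe + ∫⁻ y, w y ∂νe = ∫⁻ y, w y ∂ν := by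
      rw [hJνe, ← lintegral_add_measure, Measure.sub_add_cancel_of_le hle]
    have h2 : (∫⁻ y, w y ∂(ν - m)) + ∫⁻ y, w y ∂m = ∫⁻ y, w y ∂ν := by
      rw [← lintegral_add_measure, Measure.sub_add_cancel_of_le hm1]
    have hJval : Jfun n ν νe = (∫⁻ y, w y ∂ν) - ∫⁻ y, w y ∂νe :=
      ENNReal.eq_sub_of_add_eq hνe_fin h1
    have hstep : Jfun n ν νe ≤ ∫⁻ y, w y ∂(ν - m) := by
      rw [hJval]
      calc (∫⁻ y, w y ∂ν) - ∫⁻ y, w y ∂νe ≤ (∫⁻ y, w y ∂ν) - ∫⁻ y, w y ∂m :=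
            tsub_le_tsub_left (hkey m hm1 hmL) _
        _ ≤ ∫⁻ y, w y ∂(ν - m) := tsub_le_iff_right.mpr (le_of_eq h2.symm)
    calc Jfun n ν νe ≤ ∫⁻ y, w y ∂(ν - m) := hstep
      _ ≤ (∫⁻ y, w y ∂(ν - m)) + ∫⁻ y, w y ∂(νhat - m) := le_self_add
      _ = Jfun n ν νhat := by rw [Jfun, tvDist, ← hm, lintegral_add_measure]
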